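/- The Lie algebras g₁ and g₂ are not isomorphic as real Lie algebras. -/

import Mathlib

/-- The bracket of `g₁`: `[a₁,a₂] = -b`, `[a₁,b] = -c`, `[a₁,c] = -d`. -/
def bracket1 (u v : Fin 5 → ℝ) : Fin 5 → ℝ :=
  ![0, 0,
    -(u 0 * v 1 - u 1 * v 0),
    -(u 0 * v 2 - u 2 * v 0),
    -(u 0 * v 3 - u 3 * v 0)]

/-- The bracket of `g₂`: `[a₁,a₂] = -b`, `[a₁,b] = -c`, `[a₁,c] = -d`, `[a₂,b] = -d`. -/
def bracket2 (u v : Fin 5 → ℝ) : Fin 5 → ℝ :=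
  ![0, 0,
    -(u 0 * v 1 - u 1 * v 0),
    -(u 0 * v 2 - u 2 * v 0),
    -(u 0 * v 3 - u 3 * v 0) - (u 1 * v 2 - u 2 * v 1)]


lemma mem_span3 {V : Type*} [AddCommGroup V] [Module ℝ V]
    {w₁ w₂ w₃ x : V} (a b c : ℝ) (h : x = a • w₁ + b • w₂ + c • w₃) :
    x ∈ Submodule.span ℝ {w₁, w₂, w₃} := by
  subst h
  refine Submodule.add_mem _ (Submodule.add_mem _ ?_ ?_) ?_ <;>
    exact Submodule.smul_mem _ _ (Submodule.subset_span (by simp))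

lemma four_not_indep {V : Type*} [AddCommGroup V] [Module ℝ V]
    (w₁ w₂ w₃ : V) (p : Fin 4 → V)
    (hp : ∀ j, p j ∈ Submodule.span ℝ {w₁, w₂, w₃}) :
    ¬ LinearIndependent ℝ p := by
  classical
  intro hli
  set S := Submodule.span ℝ ({w₁, w₂, w₃} : Set V) with hS
  have hfin : Module.Finite ℝ S := by
    apply FiniteDimensional.span_of_finite
    exact (Set.finite_singleton w₃).insert w₂ |>.insert w₁
  have hcard : ({w₁, w₂, w₃} : Set V).toFinset.card ≤ 3 := by
    rw [Set.toFinset_insert, Set.toFinset_insert, Set.toFinset_singleton]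
    exact le_trans (Finset.card_insert_le _ _)
      (Nat.succ_le_succ (le_trans (Finset.card_insert_le _ _) (by simp)))
  have hrank : Module.finrank ℝ S ≤ 3 := le_trans (finrank_span_le_card _) hcard
  have hli' : LinearIndependent ℝ (fun j => (⟨p j, hp j⟩ : S)) := by
    apply LinearIndependent.of_comp S.subtype
    simpa [Function.comp_def] using hli
  have := hli'.fintype_card_le_finrank
  simp at this
  omega

theorem stmt2 :
    ¬ ∃ e : (Fin 5 → ℝ) ≃ₗ[ℝ] (Fin 5 → ℝ),
        ∀ u v : Fin 5 → ℝ, e (bracket1 u v) = bracket2 (e u) (e v) := by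
  rintro ⟨e, he⟩
  set p : Fin 4 → (Fin 5 → ℝ) := fun j => e (Pi.single j.succ (1:ℝ)) with hp
  have hind : LinearIndependent ℝ p := by
    have h1 : LinearIndependent ℝ (fun i : Fin 5 => Pi.single i (1:ℝ)) := by
      have hb : ⇑(Pi.basisFun ℝ (Fin 5)) = fun i => Pi.single i (1:ℝ) :=
        funext fun i => Pi.basisFun_apply ℝ (Fin 5) i
      have := (Pi.basisFun ℝ (Fin 5)).linearIndependent
      rwa [hb] at this
    exact (h1.comp Fin.succ (Fin.succ_injective 4)).map' e.toLinearMap e.ker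
  have hz : ∀ i j : Fin 4, bracket2 (p i) (p j) = 0 := by
    intro i j
    have hi : (Pi.single (i.succ) (1:ℝ) : Fin 5 → ℝ) 0 = 0 := by
      simp [(Fin.succ_ne_zero i).symm]
    have hj : (Pi.single (j.succ) (1:ℝ) : Fin 5 → ℝ) 0 = 0 := by
      simp [(Fin.succ_ne_zero j).symm]
    have h0 : bracket1 (Pi.single i.succ (1:ℝ)) (Pi.single j.succ 1) = 0 := by
      funext k
      fin_cases k <;> simp [bracket1, hi, hj]
    have := he (Pi.single i.succ 1) (Pi.single j.succ 1)
    rw [h0, map_zero] at this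
    exact this.symm
  have E2 : ∀ i j, p i 0 * p j 1 - p i 1 * p j 0 = 0 := by
    intro i j
    have := congrFun (hz i j) 2
    simp [bracket2] at this
    linarith
  have E3 : ∀ i j, p i 0 * p j 2 - p i 2 * p j 0 = 0 := by
    intro i j
    have := congrFun (hz i j) 3
    simp [bracket2] at this
    linarith
  have E4 : ∀ i j, (p i 0 * p j 3 - p i 3 * p j 0) + (p i 1 * p j 2 - p i 2 * p j 1) = 0 := by
    intro i j
    have := congrFun (hz i j) 4
    simp [bracket2] at this
    linarith
  have hvec : ∀ j, p j = ![p j 0, p j 1, p j 2, p j 3, p j 4] := by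
    intro j; funext k; fin_cases k <;> rfl
  have key : ∃ w₁ w₂ w₃ : Fin 5 → ℝ, ∀ j, p j ∈ Submodule.span ℝ {w₁, w₂, w₃} := by
    by_cases hB : ∃ i, p i 0 ≠ 0
    · obtain ⟨i, hi0⟩ := hB
      refine ⟨p i, ![0,0,0,0,1], ![0,0,0,0,1], fun j => ?_⟩
      have hA : p i 1 * p j 2 - p i 2 * p j 1 = 0 := by
        have h : p i 0 * (p i 1 * p j 2 - p i 2 * p j 1) = 0 := by
          linear_combination (p i 1) * (E3 i j) - (p i 2) * (E2 i j)
        rcases mul_eq_zero.mp h with h | h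
        · exact absurd h hi0
        · exact h
      have hBq : p i 0 * p j 3 - p i 3 * p j 0 = 0 := by
        linear_combination (E4 i j) - hA
      refine mem_span3 (p j 0 / p i 0) 0 (p j 4 - p j 0 / p i 0 * p i 4) ?_
      rw [hvec j, hvec i]
      funext k
      fin_cases k <;> simp <;>
        first
          | ring1
          | (field_simp [hi0]; done)
          | (field_simp [hi0]; linear_combination E2 i j)
          | (field_simp [hi0]; linear_combination E3 i j)
          | (field_simp [hi0]; linear_combination hBq)
    · push_neg at hB
      by_cases hC : ∃ i, p i 1 ≠ 0 ∨ p i 2 ≠ 0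
      · obtain ⟨i, hi12⟩ := hC
        have hrel : ∀ j, p i 1 * p j 2 - p i 2 * p j 1 = 0 := by
          intro j
          have := E4 i j
          rw [hB i, hB j] at this
          linarith
        refine ⟨p i, ![0,0,0,1,0], ![0,0,0,0,1], fun j => ?_⟩
        rcases hi12 with h1 | h2
        · refine mem_span3 (p j 1 / p i 1) (p j 3 - p j 1 / p i 1 * p i 3)
            (p j 4 - p j 1 / p i 1 * p i 4) ?_
          rw [hvec j, hvec i]
          funext k
          fin_cases k <;> simp <;>
            first
              | ring1
              | simp [hB i, hB j]
              | (field_simp [h1]; done)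
              | (field_simp [h1]; linear_combination hrel j)
              | (field_simp [h1]; linear_combination -(hrel j))
        · refine mem_span3 (p j 2 / p i 2) (p j 3 - p j 2 / p i 2 * p i 3)
            (p j 4 - p j 2 / p i 2 * p i 4) ?_
          rw [hvec j, hvec i]
          funext k
          fin_cases k <;> simp <;>
            first
              | ring1
              | simp [hB i, hB j]
              | (field_simp [h2]; done)
              | (field_simp [h2]; linear_combination hrel j)
              | (field_simp [h2]; linear_combination -(hrel j))
      · push_neg at hC
        refine ⟨![0,0,1,0,0], ![0,0,0,1,0], ![0,0,0,0,1], fun j => ?_⟩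
        refine mem_span3 (p j 2) (p j 3) (p j 4) ?_
        rw [hvec j]
        funext k
        have h12 := hC j
        fin_cases k <;> simp [hB j, h12.1, h12.2]
  obtain ⟨w₁, w₂, w₃, hmem⟩ := key
  exact four_not_indep w₁ w₂ w₃ p hmem hind
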